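/- Let θ₀ = 1 and suppose the positive sequence {θ_k} satisfies θ_{k+1} − θ_k ≤ −√θ_k θ_{k+1}/√(Q θ_k + R²) with Q > 0, R ≥ 0, and θ_{k+1}/θ_k ≥ δ > 0 for all k. Then θ_k ≤ exp(−δk/(2√Q)) + (4R/(4R + δk))² for all k ≥ 0. -/

import Mathlib

set_option maxHeartbeats 1600000 in
/-- Technical sequence estimate (case `ν = 1/2`): if
`θ_{k+1} − θ_k ≤ −√θ_k θ_{k+1}/√(Qθ_k + R²)` and `θ_{k+1}/θ_k ≥ δ > 0`, then
`θ_k ≤ exp(−δk/(2√Q)) + (4R/(4R + δk))²`. -/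
theorem theta_estimate_nu_half (θ : ℕ → ℝ) (Q R δ : ℝ)
    (hQ : 0 < Q) (hR : 0 ≤ R) (hδ : 0 < δ)
    (hpos : ∀ k, 0 < θ k) (hθ0 : θ 0 = 1)
    (hratio : ∀ k, θ (k+1) / θ k ≥ δ)
    (hrec : ∀ k, θ (k+1) - θ k ≤
      -(Real.sqrt (θ k) * θ (k+1)) / Real.sqrt (Q * θ k + R^2)) :
    ∀ k : ℕ, θ k ≤
      Real.exp (-(δ * k) / (2 * Real.sqrt Q)) + (4 * R / (4 * R + δ * k))^2 := by
  set sQ := Real.sqrt Q with hsQdef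
  have hsQ : 0 < sQ := Real.sqrt_pos.mpr hQ
  set y : ℕ → ℝ := fun k => Real.sqrt (θ k) with hydef
  have hy : ∀ k, 0 < y k := fun k => Real.sqrt_pos.mpr (hpos k)
  have hysq : ∀ k, (y k)^2 = θ k := fun k => Real.sq_sqrt (hpos k).le
  set D : ℕ → ℝ := fun k => sQ * y k + R with hDdef
  have hDeq : ∀ k, D k = sQ * y k + R := fun k => rfl
  have hD : ∀ k, 0 < D k := by
    intro k
    rw [hDeq k]
    have := mul_pos hsQ (hy k)
    linarith
  -- Main per-step inequality: θ (k+1) * (D k + y k) ≤ θ k * D k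
  have key : ∀ k, θ (k+1) * (D k + y k) ≤ θ k * D k := by
    intro k
    set S := Real.sqrt (Q * θ k + R^2) with hSdef
    have hS : 0 < S := Real.sqrt_pos.mpr (by nlinarith [hpos k])
    have hSD : S ≤ D k := by
      rw [hSdef, Real.sqrt_le_left (hD k).le, hDeq k]
      have h1 : (y k)^2 = θ k := hysq k
      have h2 : sQ^2 = Q := Real.sq_sqrt hQ.le
      nlinarith [mul_nonneg (mul_nonneg hsQ.le (hy k).le) hR]
    have h1 : y k * θ (k+1) / S ≤ θ k - θ (k+1) := by
      have := hrec k
      rw [neg_div] at this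
      linarith
    have h2 : y k * θ (k+1) ≤ (θ k - θ (k+1)) * S := (div_le_iff₀ hS).mp h1
    have h3 : 0 ≤ θ k - θ (k+1) := by
      nlinarith [mul_pos (hy k) (hpos (k+1)), hS]
    have h4 : (θ k - θ (k+1)) * S ≤ (θ k - θ (k+1)) * D k :=
      mul_le_mul_of_nonneg_left hSD h3
    nlinarith
  have hmono : ∀ k, θ (k+1) ≤ θ k := by
    intro k
    have := key k
    nlinarith [mul_pos (hpos (k+1)) (hy k), hD k]
  -- ratio consequence: δ * (D k + y k) ≤ D k
  have hδD : ∀ k, δ * (D k + y k) ≤ D k := by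
    intro k
    have h1 : δ * θ k ≤ θ (k+1) := (le_div_iff₀ (hpos k)).mp (hratio k)
    have hpos' : (0:ℝ) ≤ D k + y k := by linarith [hD k, hy k]
    have h2 : δ * θ k * (D k + y k) ≤ θ (k+1) * (D k + y k) :=
      mul_le_mul_of_nonneg_right h1 hpos'
    have h3 : δ * θ k * (D k + y k) ≤ θ k * D k := h2.trans (key k)
    have := hpos k
    nlinarith
  -- the Lyapunov function
  set Φ : ℕ → ℝ := fun k => -(sQ * Real.log (θ k)) + 2*R*((y k)⁻¹ - 1) with hΦdef
  have hstep : ∀ k, Φ k + δ ≤ Φ (k+1) := by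
    intro k
    have hDk := hD k
    have hyk := hy k
    have hyk1 := hy (k+1)
    have hDY : (0:ℝ) < D k + y k := by linarith
    have h4DY : (0:ℝ) < 4 * D k + y k := by linarith
    -- p1 : log bound
    have hq : θ (k+1) ≤ θ k * (D k / (D k + y k)) := by
      rw [mul_div_assoc', le_div_iff₀ hDY]
      exact key k
    have p1 : Real.log (θ (k+1)) ≤ Real.log (θ k) - y k / (D k + y k) := by
      have l1 : Real.log (θ (k+1)) ≤ Real.log (θ k * (D k / (D k + y k))) :=
        Real.log_le_log (hpos (k+1)) hq
      have l2 : Real.log (θ k * (D k / (D k + y k)))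
          = Real.log (θ k) + Real.log (D k / (D k + y k)) :=
        Real.log_mul (ne_of_gt (hpos k)) (ne_of_gt (by positivity))
      have l3 : Real.log (D k / (D k + y k)) ≤ D k / (D k + y k) - 1 :=
        Real.log_le_sub_one_of_pos (by positivity)
      have l4 : D k / (D k + y k) - 1 = -(y k / (D k + y k)) := by
        field_simp
        ring
      calc Real.log (θ (k+1))
          ≤ Real.log (θ k) + Real.log (D k / (D k + y k)) := by rw [← l2]; exact l1
        _ ≤ Real.log (θ k) + (D k / (D k + y k) - 1) := by linarith
        _ = Real.log (θ k) - y k / (D k + y k) := by rw [l4]; ring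
    -- p2 : inverse-sqrt increment
    have p2 : (y k)⁻¹ + 2 / (4 * D k + y k) ≤ (y (k+1))⁻¹ := by
      set A : ℝ := (y k)⁻¹ + 2 / (4 * D k + y k) with hAdef
      have hA : 0 < A := by positivity
      have expand : A = (4 * D k + 3 * y k) / (y k * (4 * D k + y k)) := by
        rw [hAdef]
        field_simp
        ring
      have h6 : θ (k+1) * (4*D k+3*y k)^2 * (D k + y k)
          ≤ θ k * D k * (4*D k+3*y k)^2 := by
        have := mul_le_mul_of_nonneg_right (key k) (sq_nonneg (4*D k+3*y k))
        nlinarith [this]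
      have h7 : θ k * D k * (4*D k+3*y k)^2
          ≤ (y k)^2 * (4*D k+y k)^2 * (D k + y k) := by
        rw [← hysq k]
        nlinarith [pow_pos hyk 5]
      have hpoly : θ (k+1) * (4*D k+3*y k)^2 ≤ ((y k) * (4*D k+y k))^2 := by
        have h8 : θ (k+1) * (4*D k+3*y k)^2 ≤ (y k)^2 * (4*D k+y k)^2 :=
          le_of_mul_le_mul_right (by linarith) hDY
        calc θ (k+1) * (4*D k+3*y k)^2 ≤ (y k)^2 * (4*D k+y k)^2 := h8
          _ = ((y k) * (4*D k+y k))^2 := by ring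
      have hthA : θ (k+1) ≤ (A⁻¹)^2 := by
        have hAinv : A⁻¹ = (y k * (4 * D k + y k)) / (4 * D k + 3 * y k) := by
          rw [expand, inv_div]
        rw [hAinv, div_pow, le_div_iff₀ (by positivity)]
        exact hpoly
      have hyA : y (k+1) ≤ A⁻¹ := by
        calc y (k+1) = Real.sqrt (θ (k+1)) := rfl
          _ ≤ Real.sqrt ((A⁻¹)^2) := Real.sqrt_le_sqrt hthA
          _ = A⁻¹ := Real.sqrt_sq (by positivity)
      have := inv_anti₀ hyk1 hyA
      rwa [inv_inv] at this
    -- combine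
    have hcomb : δ ≤ sQ * (y k / (D k + y k)) + 2 * R * (2 / (4 * D k + y k)) := by
      have hδ2 : δ * ((sQ * y k + R) + y k) ≤ sQ * y k + R := by
        have := hδD k
        rwa [hDeq k] at this
      rw [mul_div_assoc', mul_div_assoc',
        div_add_div _ _ (ne_of_gt hDY) (ne_of_gt h4DY), le_div_iff₀ (mul_pos hDY h4DY),
        hDeq k]
      nlinarith [mul_le_mul_of_nonneg_right hδ2
          (show (0:ℝ) ≤ 4 * (sQ * y k + R) + y k by
            have := hDeq k ▸ h4DY; linarith),
        mul_nonneg hR hyk.le]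
    have e1 : sQ * (y k / (D k + y k)) ≤ sQ * (Real.log (θ k) - Real.log (θ (k+1))) := by
      apply mul_le_mul_of_nonneg_left _ hsQ.le
      linarith
    have e2 : 2 * R * (2 / (4 * D k + y k)) ≤ 2 * R * ((y (k+1))⁻¹ - (y k)⁻¹) := by
      apply mul_le_mul_of_nonneg_left _ (by linarith : (0:ℝ) ≤ 2 * R)
      linarith
    have hsum := hcomb.trans (add_le_add e1 e2)
    show -(sQ * Real.log (θ k)) + 2*R*((y k)⁻¹ - 1) + δ ≤
      -(sQ * Real.log (θ (k+1))) + 2*R*((y (k+1))⁻¹ - 1)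
    linarith [hsum]
  have hΦ0 : Φ 0 = 0 := by
    simp only [hΦdef, hydef, hθ0, Real.log_one, Real.sqrt_one]
    norm_num
  have hΦk : ∀ k : ℕ, δ * k ≤ Φ k := by
    intro k
    induction k with
    | zero => simp [hΦ0]
    | succ n ih =>
      have := hstep n
      push_cast
      push_cast at ih
      linarith
  -- final dichotomy
  intro k
  have hΦle := hΦk k
  rcases le_or_gt (2*R*((y k)⁻¹ - 1)) (-(sQ * Real.log (θ k))) with hcase | hcase
  · -- exponential term dominates
    have hΦle' : δ * k ≤ -(sQ * Real.log (θ k)) + 2*R*((y k)⁻¹ - 1) := hΦle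
    have h1 : δ * k ≤ 2 * (-(sQ * Real.log (θ k))) := by linarith
    have h2 : Real.log (θ k) ≤ -(δ * k) / (2 * sQ) := by
      rw [le_div_iff₀ (by positivity : (0:ℝ) < 2 * sQ)]
      nlinarith
    have h3 : θ k ≤ Real.exp (-(δ * k) / (2 * sQ)) := by
      calc θ k = Real.exp (Real.log (θ k)) := (Real.exp_log (hpos k)).symm
        _ ≤ Real.exp (-(δ * k) / (2 * sQ)) := Real.exp_le_exp.mpr h2
    have h4 : (0:ℝ) ≤ (4 * R / (4 * R + δ * k))^2 := sq_nonneg _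
    linarith
  · -- polynomial term dominates
    have hΦle' : δ * k ≤ -(sQ * Real.log (θ k)) + 2*R*((y k)⁻¹ - 1) := hΦle
    have h1 : δ * k ≤ 4 * R * ((y k)⁻¹ - 1) := by linarith
    rcases eq_or_lt_of_le hR with hR0 | hRpos
    · -- R = 0 : forces k = 0
      have hk0 : (k : ℝ) ≤ 0 := by
        rw [← hR0] at h1
        by_contra h
        push_neg at h
        nlinarith [mul_pos hδ h]
      have hk : k = 0 := by
        have h0 : (0:ℝ) ≤ (k:ℝ) := Nat.cast_nonneg k
        have : (k:ℝ) = 0 := le_antisymm hk0 h0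
        exact_mod_cast this
      subst hk
      rw [hθ0, ← hR0]
      norm_num
    · -- R > 0
      have hyk := hy k
      have hdk : (0:ℝ) ≤ δ * k := by positivity
      have h2 : (4 * R + δ * k) * y k ≤ 4 * R := by
        have h1' : 4 * R + δ * k ≤ 4 * R * (y k)⁻¹ := by linarith
        have h1'' := mul_le_mul_of_nonneg_right h1' hyk.le
        rw [mul_assoc, inv_mul_cancel₀ (ne_of_gt hyk), mul_one] at h1''
        exact h1''
      have h3 : y k ≤ 4 * R / (4 * R + δ * k) := by
        rw [le_div_iff₀ (by linarith)]
        linarith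
      have h4 : θ k ≤ (4 * R / (4 * R + δ * k))^2 := by
        rw [← hysq k]
        exact pow_le_pow_left₀ hyk.le h3 2
      have h5 : 0 < Real.exp (-(δ * k) / (2 * sQ)) := Real.exp_pos _
      linarith
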